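/- Suppose (X₁, U₁) solves X₁S = AX₁ + BU₁ + E, CX₁ = 0 and (X₂, U₂) solves 0 = AX₂ + BU₂, CX₂ = 1. Then under the control u = K₁x + (U₁ - K₁X₁)ω + (U₂ - K₁X₂)r for a constant reference r, the error variable x̄ = x - X₁ω - X₂r satisfies x̄̇ = (A + BK₁)x̄ along ẋ = Ax + Bu + Eω, ω̇ = Sω; hence if A + BK₁ is Hurwitz, the output y = Cx converges exponentially to r. -/

import Mathlib

open NormedSpace Matrix

attribute [local instance] Matrix.linftyOpNormedRing Matrix.linftyOpNormedAlgebra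

noncomputable section

/-- `P ↦ P.mulVec w` as a continuous linear map. -/
def mulVecCLM {n : ℕ} (R : Type*) [NontriviallyNormedField R] [CompleteSpace R] (w : Fin n → R) :
    Matrix (Fin n) (Fin n) R →L[R] (Fin n → R) :=
  LinearMap.toContinuousLinearMap
    { toFun := fun P => P.mulVec w
      map_add' := fun P Q => Matrix.add_mulVec P Q w
      map_smul' := fun c P => Matrix.smul_mulVec c P w }

@[simp] lemma mulVecCLM_apply {n : ℕ} {R : Type*} [NontriviallyNormedField R] [CompleteSpace R]
    (w : Fin n → R) (P : Matrix (Fin n) (Fin n) R) : mulVecCLM R w P = P.mulVec w := by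
  simp [mulVecCLM]

end
noncomputable section

lemma exp_mulVec_of_pow_eq_zero {n : ℕ} (Mc : Matrix (Fin n) (Fin n) ℂ) (μ : ℂ) (k : ℕ)
    (w : Fin n → ℂ) (hw : ((Mc - μ • 1) ^ k).mulVec w = 0) (t : ℝ) :
    (exp (t • Mc)).mulVec w =
      Complex.exp (t * μ) • ∑ j ∈ Finset.range k,
        ((t : ℂ) ^ j * ((j.factorial : ℂ))⁻¹) • (((Mc - μ • 1) ^ j).mulVec w) := by
  set N := Mc - μ • 1 with hN
  have h0 : (exp : Matrix (Fin n) (Fin n) ℂ → _) = exp := rfl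
  have h1 : t • Mc = ((t : ℂ) * μ) • (1 : Matrix (Fin n) (Fin n) ℂ) + (t : ℂ) • N := by
    rw [hN, smul_sub, smul_smul]
    have : t • Mc = (t : ℂ) • Mc := by
      ext i j; simp [Complex.real_smul]
    rw [this]; abel
  have hcomm : Commute (((t : ℂ) * μ) • (1 : Matrix (Fin n) (Fin n) ℂ)) ((t : ℂ) • N) :=
    ((Commute.one_left _).smul_left _).smul_right _
  have h2 : exp ((((t : ℂ) * μ)) • (1 : Matrix (Fin n) (Fin n) ℂ))
      = Complex.exp (t * μ) • (1 : Matrix (Fin n) (Fin n) ℂ) := by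
    rw [← Algebra.algebraMap_eq_smul_one, Complex.exp_eq_exp_ℂ, ← Algebra.algebraMap_eq_smul_one]
    exact (algebraMap_exp_comm _).symm
  have h3 : (exp ((t : ℂ) • N)).mulVec w
      = ∑ j ∈ Finset.range k, ((t : ℂ) ^ j * ((j.factorial : ℂ))⁻¹) • ((N ^ j).mulVec w) := by
    rw [exp_eq_tsum ℂ]
    have hsum := expSeries_summable' (𝕂 := ℂ) ((t : ℂ) • N)
    have := (mulVecCLM ℂ w).map_tsum hsum
    rw [show (∑' (j : ℕ), ((j.factorial : ℂ))⁻¹ • ((t:ℂ) • N) ^ j).mulVec w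
        = mulVecCLM ℂ w (∑' (j : ℕ), ((j.factorial : ℂ))⁻¹ • ((t:ℂ) • N) ^ j) from rfl, this]
    refine tsum_eq_sum ?_ |>.trans (Finset.sum_congr rfl ?_)
    · intro j hj
      rw [Finset.mem_range, not_lt] at hj
      have : N ^ j = N ^ (j - k) * N ^ k := by rw [← pow_add, Nat.sub_add_cancel hj]
      simp [smul_pow, this, ← Matrix.mulVec_mulVec, hw]
    · intro j hj
      rw [smul_pow, _root_.map_smul, _root_.map_smul, mulVecCLM_apply, smul_smul, mul_comm]
  calc (exp (t • Mc)).mulVec w = (exp (t • Mc)).mulVec w := by rw [h0]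
    _ = (exp (((t : ℂ) * μ) • 1) * exp ((t : ℂ) • N)).mulVec w := by
        rw [h1]; exact congrArg (fun P => P *ᵥ w) (exp_add_of_commute hcomm)
    _ = Complex.exp (t * μ) • (exp ((t : ℂ) • N)).mulVec w := by
        rw [h2, smul_mul_assoc, one_mul, Matrix.smul_mulVec]
    _ = _ := by rw [h3]

end
noncomputable section

lemma pow_le_exp_aux (t c : ℝ) (ht : 0 ≤ t) (hc : 0 < c) (j : ℕ) :
    t ^ j ≤ j.factorial * c⁻¹ ^ j * Real.exp (c * t) := by
  have h1 : (c * t) ^ j / j.factorial ≤ Real.exp (c * t) := by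
    refine le_trans ?_ (Real.sum_le_exp_of_nonneg (mul_nonneg hc.le ht) (j + 1))
    exact Finset.single_le_sum (f := fun i => (c * t) ^ i / i.factorial)
      (fun i _ => by positivity) (Finset.self_mem_range_succ j)
  have hfac : (0:ℝ) < j.factorial := by positivity
  rw [div_le_iff₀ hfac, mul_pow] at h1
  have h2 : t ^ j = c⁻¹ ^ j * (c ^ j * t ^ j) := by
    rw [← mul_assoc, ← mul_pow, inv_mul_cancel₀ hc.ne', one_pow, one_mul]
  rw [h2]
  calc c⁻¹ ^ j * (c ^ j * t ^ j) ≤ c⁻¹ ^ j * (Real.exp (c * t) * j.factorial) :=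
        mul_le_mul_of_nonneg_left h1 (by positivity)
    _ = j.factorial * c⁻¹ ^ j * Real.exp (c * t) := by ring

lemma decay_gen {n : ℕ} (Mc : Matrix (Fin n) (Fin n) ℂ) (μ : ℂ) (b : ℝ)
    (hb : 0 < b) (hbμ : b ≤ -μ.re / 2) (w : Fin n → ℂ)
    (hw : ∃ k, ((Mc - μ • 1) ^ k).mulVec w = 0) :
    ∃ a : ℝ, 0 ≤ a ∧ ∀ t ≥ (0:ℝ), ‖(exp (t • Mc)).mulVec w‖ ≤ a * Real.exp (-b * t) := by
  obtain ⟨k, hk⟩ := hw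
  set N := Mc - μ • 1 with hN
  set c : ℝ := -μ.re - b with hc_def
  have hc : 0 < c := by
    have h1 : b ≤ -μ.re / 2 := hbμ
    have h2 : 0 < -μ.re / 2 := lt_of_lt_of_le hb h1
    simp only [hc_def]; linarith
  refine ⟨∑ j ∈ Finset.range k, ‖(N ^ j).mulVec w‖ * c⁻¹ ^ j, by positivity, fun t ht => ?_⟩
  rw [exp_mulVec_of_pow_eq_zero Mc μ k w hk t, norm_smul]
  have habs : ‖Complex.exp (↑t * μ)‖ = Real.exp (t * μ.re) := by
    rw [Complex.norm_exp]
    norm_num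
  have hcoef : ∀ j : ℕ, ‖((t : ℂ) ^ j * ((j.factorial : ℂ))⁻¹)‖
      = t ^ j * ((j.factorial : ℝ))⁻¹ := by
    intro j
    rw [norm_mul, norm_pow, norm_inv, Complex.norm_real, Real.norm_eq_abs,
      abs_of_nonneg ht, Complex.norm_natCast]
  rw [habs]
  have hsum1 : ‖∑ j ∈ Finset.range k,
        ((t : ℂ) ^ j * ((j.factorial : ℂ))⁻¹) • ((N ^ j).mulVec w)‖
      ≤ ∑ j ∈ Finset.range k, t ^ j * ((j.factorial : ℝ))⁻¹ * ‖(N ^ j).mulVec w‖ := by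
    refine le_trans (norm_sum_le _ _) (Finset.sum_le_sum fun j _ => ?_)
    rw [norm_smul, hcoef j]
  calc Real.exp (t * μ.re) * ‖∑ j ∈ Finset.range k,
        ((t : ℂ) ^ j * ((j.factorial : ℂ))⁻¹) • ((N ^ j).mulVec w)‖
      ≤ Real.exp (t * μ.re) * ∑ j ∈ Finset.range k,
          t ^ j * ((j.factorial : ℝ))⁻¹ * ‖(N ^ j).mulVec w‖ :=
        mul_le_mul_of_nonneg_left hsum1 (Real.exp_nonneg _)
    _ = ∑ j ∈ Finset.range k,
          Real.exp (t * μ.re) * (t ^ j * ((j.factorial : ℝ))⁻¹ * ‖(N ^ j).mulVec w‖) := by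
        rw [Finset.mul_sum]
    _ ≤ ∑ j ∈ Finset.range k, ‖(N ^ j).mulVec w‖ * c⁻¹ ^ j * Real.exp (-b * t) := by
        refine Finset.sum_le_sum fun j _ => ?_
        have hpow := pow_le_exp_aux t c ht hc j
        have hfac : (0:ℝ) < (j.factorial : ℝ) := by positivity
        have key : t ^ j * ((j.factorial : ℝ))⁻¹ ≤ c⁻¹ ^ j * Real.exp (c * t) := by
          calc t ^ j * ((j.factorial : ℝ))⁻¹
              ≤ ((j.factorial : ℝ) * c⁻¹ ^ j * Real.exp (c * t)) * ((j.factorial : ℝ))⁻¹ := by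
                gcongr
            _ = c⁻¹ ^ j * Real.exp (c * t) := by field_simp
        have hexp : Real.exp (c * t) * Real.exp (t * μ.re) = Real.exp (-b * t) := by
          rw [← Real.exp_add]
          congr 1
          simp only [hc_def]; ring
        calc Real.exp (t * μ.re) * (t ^ j * ((j.factorial : ℝ))⁻¹ * ‖(N ^ j).mulVec w‖)
            ≤ Real.exp (t * μ.re) * (c⁻¹ ^ j * Real.exp (c * t) * ‖(N ^ j).mulVec w‖) := by
              refine mul_le_mul_of_nonneg_left ?_ (Real.exp_nonneg _)
              exact mul_le_mul_of_nonneg_right key (norm_nonneg _)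
          _ = ‖(N ^ j).mulVec w‖ * c⁻¹ ^ j * Real.exp (-b * t) := by
              rw [← hexp]; ring
    _ = (∑ j ∈ Finset.range k, ‖(N ^ j).mulVec w‖ * c⁻¹ ^ j) * Real.exp (-b * t) := by
        rw [Finset.sum_mul]

end
noncomputable section

lemma eig_spectrum {n : ℕ} (Mc : Matrix (Fin n) (Fin n) ℂ) (μ : ℂ) (x : Fin n → ℂ)
    (hx : x ≠ 0) (hmem : x ∈ Module.End.maxGenEigenspace (Matrix.toLinAlgEquiv' Mc : Module.End ℂ (Fin n → ℂ)) μ) :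
    μ ∈ spectrum ℂ Mc := by
  set f : Module.End ℂ (Fin n → ℂ) := Matrix.toLinAlgEquiv' Mc with hf
  rw [Module.End.mem_maxGenEigenspace] at hmem
  obtain ⟨k, hk⟩ := hmem
  have hgen : f.HasGenEigenvalue μ k := by
    rw [Module.End.hasGenEigenvalue_iff]
    intro hbot
    have : x ∈ f.genEigenspace μ (k : ℕ∞) := by
      rw [Module.End.mem_genEigenspace_nat]
      exact hk
    rw [hbot] at this
    exact hx (Submodule.mem_bot ℂ |>.mp this)
  have heig : f.HasEigenvalue μ := Module.End.hasEigenvalue_of_hasGenEigenvalue hgen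
  have := Module.End.hasEigenvalue_iff_mem_spectrum.mp heig
  rwa [AlgEquiv.spectrum_eq Matrix.toLinAlgEquiv' Mc] at this

lemma maxGen_matrix {n : ℕ} (Mc : Matrix (Fin n) (Fin n) ℂ) (μ : ℂ) (x : Fin n → ℂ)
    (hmem : x ∈ Module.End.maxGenEigenspace (Matrix.toLinAlgEquiv' Mc : Module.End ℂ (Fin n → ℂ)) μ) :
    ∃ k, ((Mc - μ • 1) ^ k).mulVec x = 0 := by
  rw [Module.End.mem_maxGenEigenspace] at hmem
  obtain ⟨k, hk⟩ := hmem
  refine ⟨k, ?_⟩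
  have : Matrix.toLinAlgEquiv' ((Mc - μ • 1) ^ k)
      = (Matrix.toLinAlgEquiv' Mc - μ • 1) ^ k := by
    rw [map_pow, map_sub, _root_.map_smul, _root_.map_one]
  calc ((Mc - μ • 1) ^ k).mulVec x = Matrix.toLinAlgEquiv' ((Mc - μ • 1) ^ k) x := by
        rw [Matrix.toLinAlgEquiv'_apply]
    _ = ((Matrix.toLinAlgEquiv' Mc - μ • 1) ^ k) x := by rw [this]
    _ = 0 := hk

lemma matrix_exp_decay {n : ℕ} (M : Matrix (Fin n) (Fin n) ℝ)
    (hH : ∀ μ ∈ spectrum ℂ (M.map Complex.ofReal), μ.re < 0) (v : Fin n → ℝ) :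
    ∃ a b : ℝ, 0 < a ∧ 0 < b ∧ ∀ t ≥ (0:ℝ), ∀ i,
      |((exp (t • M)).mulVec v) i| ≤ a * Real.exp (-b * t) := by
  classical
  set Mc : Matrix (Fin n) (Fin n) ℂ := M.map Complex.ofReal with hMc
  set vc : Fin n → ℂ := fun i => (v i : ℂ) with hvc
  -- complexification of the exponential
  have hmap : ∀ t : ℝ, (exp (t • M)).map Complex.ofReal = exp (t • Mc) := by
    intro t
    have hcont : Continuous fun P : Matrix (Fin n) (Fin n) ℝ =>
        (Complex.ofRealHom.mapMatrix : Matrix (Fin n) (Fin n) ℝ →+* Matrix (Fin n) (Fin n) ℂ) P :=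
      Continuous.matrix_map continuous_id Complex.continuous_ofReal
    have := map_exp (Complex.ofRealHom.mapMatrix
      : Matrix (Fin n) (Fin n) ℝ →+* Matrix (Fin n) (Fin n) ℂ) hcont (t • M)
    have hsm : (Complex.ofRealHom.mapMatrix
        : Matrix (Fin n) (Fin n) ℝ →+* Matrix (Fin n) (Fin n) ℂ) (t • M) = t • Mc := by
      ext i j
      simp [RingHom.mapMatrix_apply, Matrix.map_apply, hMc, Complex.real_smul]
    rw [hsm] at this
    exact this
  have hcoord : ∀ (t : ℝ) (i : Fin n),
      |((exp (t • M)).mulVec v) i| = ‖((exp (t • Mc)).mulVec vc) i‖ := by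
    intro t i
    rw [← hmap t]
    have : (((exp (t • M)).map Complex.ofReal).mulVec vc) i
        = ((((exp (t • M)).mulVec v) i : ℝ) : ℂ) := by
      simp only [Matrix.mulVec, dotProduct, Matrix.map_apply, hvc]
      push_cast
      rfl
    rw [this, Complex.norm_real, Real.norm_eq_abs]
  -- decompose vc into generalized eigenvectors
  set f : Module.End ℂ (Fin n → ℂ) := Matrix.toLinAlgEquiv' Mc with hf
  have htop : vc ∈ ⨆ μ : ℂ, f.maxGenEigenspace μ := by
    rw [Module.End.iSup_maxGenEigenspace_eq_top]
    trivial
  rw [Submodule.mem_iSup_iff_exists_finsupp] at htop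
  obtain ⟨cf, hcf, hsum⟩ := htop
  -- choose b
  set T : Finset ℝ := insert 1 (cf.support.image (fun μ => -μ.re / 2)) with hT
  have hTne : T.Nonempty := ⟨1, by simp [hT]⟩
  set b : ℝ := T.min' hTne with hb_def
  have hμre : ∀ μ ∈ cf.support, μ.re < 0 := by
    intro μ hμ
    exact hH μ (eig_spectrum Mc μ (cf μ) (Finsupp.mem_support_iff.mp hμ) (hcf μ))
  have hb : 0 < b := by
    rw [hb_def, Finset.lt_min'_iff]
    intro y hy
    rw [hT, Finset.mem_insert] at hy
    rcases hy with rfl | hy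
    · norm_num
    · obtain ⟨μ, hμ, rfl⟩ := Finset.mem_image.mp hy
      have := hμre μ hμ
      linarith
  have hbμ : ∀ μ ∈ cf.support, b ≤ -μ.re / 2 := by
    intro μ hμ
    refine Finset.min'_le _ _ ?_
    rw [hT]
    exact Finset.mem_insert_of_mem (Finset.mem_image_of_mem _ hμ)
  -- per-eigenvector decay
  have key : ∀ μ ∈ cf.support, ∃ aμ : ℝ, 0 ≤ aμ ∧ ∀ t ≥ (0:ℝ),
      ‖(exp (t • Mc)).mulVec (cf μ)‖ ≤ aμ * Real.exp (-b * t) := by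
    intro μ hμ
    exact decay_gen Mc μ b hb (hbμ μ hμ) (cf μ) (maxGen_matrix Mc μ (cf μ) (hcf μ))
  choose! F hF0 hF using key
  have hsum0 : 0 ≤ ∑ μ ∈ cf.support, F μ := Finset.sum_nonneg fun μ hμ => hF0 μ hμ
  refine ⟨(∑ μ ∈ cf.support, F μ) + 1, b, by linarith, hb, fun t ht i => ?_⟩
  rw [hcoord t i]
  have hz : (exp (t • Mc)).mulVec vc = ∑ μ ∈ cf.support, (exp (t • Mc)).mulVec (cf μ) := by
    rw [← hsum, Finsupp.sum]
    simp only [← Matrix.mulVecLin_apply, map_sum]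
  calc ‖(exp (t • Mc) *ᵥ vc) i‖ ≤ ‖exp (t • Mc) *ᵥ vc‖ := norm_le_pi_norm _ i
    _ = ‖∑ μ ∈ cf.support, exp (t • Mc) *ᵥ cf μ‖ := by rw [hz]
    _ ≤ ∑ μ ∈ cf.support, ‖exp (t • Mc) *ᵥ cf μ‖ := norm_sum_le _ _
    _ ≤ ∑ μ ∈ cf.support, F μ * Real.exp (-b * t) :=
        Finset.sum_le_sum fun μ hμ => hF μ hμ t ht
    _ = (∑ μ ∈ cf.support, F μ) * Real.exp (-b * t) := (Finset.sum_mul _ _ _).symm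
    _ ≤ ((∑ μ ∈ cf.support, F μ) + 1) * Real.exp (-b * t) := by
        have h := Real.exp_nonneg (-b * t)
        nlinarith

end
noncomputable section

lemma solution_eq_exp {n : ℕ} (M : Matrix (Fin n) (Fin n) ℝ) (f : ℝ → Fin n → ℝ)
    (hf : ∀ t, HasDerivAt f (M.mulVec (f t)) t) :
    ∀ t ≥ (0:ℝ), f t = (exp (t • M)).mulVec (f 0) := by
  set L : (Fin n → ℝ) →L[ℝ] (Fin n → ℝ) := LinearMap.toContinuousLinearMap M.mulVecLin with hL
  have hLy : ∀ y, L y = M.mulVec y := fun y => rfl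
  set g : ℝ → Fin n → ℝ := fun t => (exp (t • M)).mulVec (f 0) with hg_def
  have hg : ∀ t, HasDerivAt g (M.mulVec (g t)) t := by
    intro t
    have h1 : HasDerivAt (fun s : ℝ => exp (s • M)) (M * exp (t • M)) t :=
      hasDerivAt_exp_smul_const' M t
    have h2 := ((mulVecCLM ℝ (f 0)).hasFDerivAt).comp_hasDerivAt t h1
    simp only [Function.comp_def, mulVecCLM_apply] at h2
    have : (M * exp (t • M)).mulVec (f 0) = M.mulVec (g t) := by
      rw [hg_def, ← Matrix.mulVec_mulVec]
    rw [← this]; exact h2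
  intro t ht
  rcases eq_or_lt_of_le ht with rfl | ht'
  · simp [hg_def]
  have key : Set.EqOn f g (Set.Icc 0 t) := by
    refine ODE_solution_unique (v := fun _ y => L y) (K := ‖L‖₊) (f := f) (g := g)
      (fun _ => L.lipschitz) (fun s _ => (hf s).continuousAt.continuousWithinAt)
      (fun s _ => ?_) (fun s _ => (hg s).continuousAt.continuousWithinAt)
      (fun s _ => ?_) ?_
    · simpa only [hLy] using (hf s).hasDerivWithinAt
    · simpa only [hLy] using (hg s).hasDerivWithinAt
    · simp [hg_def]
  exact key (Set.mem_Icc.mpr ⟨ht, le_refl t⟩)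

end
/-- A real square matrix is Hurwitz if all its (complex) eigenvalues have
negative real part. -/
def IsHurwitz {k : ℕ} (M : Matrix (Fin k) (Fin k) ℝ) : Prop :=
  ∀ μ ∈ spectrum ℂ (M.map (Complex.ofReal)), μ.re < 0

/-- With the full-information regulator
`u = K₁x + (U₁ - K₁X₁)ω + (U₂ - K₁X₂)r`, the error `x̄ = x - X₁ω - X₂r` satisfies
`x̄' = (A + BK₁)x̄`, and hence if `A + BK₁` is Hurwitz the output `y = Cx`
converges exponentially to the constant reference `r`. -/
theorem full_information_regulator_tracking (n q : ℕ)
    (A : Matrix (Fin n) (Fin n) ℝ) (B : Matrix (Fin n) (Fin 1) ℝ)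
    (C : Matrix (Fin 1) (Fin n) ℝ) (E : Matrix (Fin n) (Fin q) ℝ)
    (S : Matrix (Fin q) (Fin q) ℝ) (K₁ : Matrix (Fin 1) (Fin n) ℝ)
    (X₁ : Matrix (Fin n) (Fin q) ℝ) (U₁ : Matrix (Fin 1) (Fin q) ℝ)
    (X₂ : Matrix (Fin n) (Fin 1) ℝ) (U₂ : Matrix (Fin 1) (Fin 1) ℝ)
    (hreg1 : X₁ * S = A * X₁ + B * U₁ + E) (hreg1' : C * X₁ = 0)
    (hreg2 : (0 : Matrix (Fin n) (Fin 1) ℝ) = A * X₂ + B * U₂) (hreg2' : C * X₂ = 1)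
    (r : ℝ) (x : ℝ → Fin n → ℝ) (ω : ℝ → Fin q → ℝ)
    (u : ℝ → Fin 1 → ℝ)
    (hu : ∀ t, u t = K₁.mulVec (x t) + (U₁ - K₁ * X₁).mulVec (ω t)
      + (U₂ - K₁ * X₂).mulVec (fun _ => r))
    (hx : ∀ t, HasDerivAt x (A.mulVec (x t) + B.mulVec (u t) + E.mulVec (ω t)) t)
    (hω : ∀ t, HasDerivAt ω (S.mulVec (ω t)) t) :
    let xbar : ℝ → Fin n → ℝ := fun t => x t - X₁.mulVec (ω t) - X₂.mulVec (fun _ => r)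
    (∀ t, HasDerivAt xbar ((A + B * K₁).mulVec (xbar t)) t) ∧
      (IsHurwitz (A + B * K₁) → ∃ a b : ℝ, 0 < a ∧ 0 < b ∧
        ∀ t ≥ (0 : ℝ), |C.mulVec (x t) 0 - r| ≤ a * Real.exp (-b * t)) := by
  intro xbar
  set c : Fin 1 → ℝ := fun _ => r with hc
  -- the derivative statement
  have hX1 : ∀ t, HasDerivAt (fun s => X₁.mulVec (ω s)) (X₁.mulVec (S.mulVec (ω t))) t := by
    intro t
    have h := (LinearMap.toContinuousLinearMap
      X₁.mulVecLin).hasFDerivAt.comp_hasDerivAt t (hω t)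
    simpa [Function.comp_def] using h
  have hder : ∀ t, HasDerivAt xbar ((A + B * K₁).mulVec (xbar t)) t := by
    intro t
    have h2 := ((hx t).sub (hX1 t)).sub_const (X₂.mulVec c)
    have hkey : (A + B * K₁).mulVec (xbar t)
        = A.mulVec (x t) + B.mulVec (u t) + E.mulVec (ω t) - X₁.mulVec (S.mulVec (ω t)) := by
      have e1 : (A * X₁).mulVec (ω t)
          = (X₁ * S).mulVec (ω t) - (B * U₁).mulVec (ω t) - E.mulVec (ω t) := by
        rw [hreg1, Matrix.add_mulVec, Matrix.add_mulVec]
        abel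
      have e2 : (A * X₂).mulVec c = -((B * U₂).mulVec c) := by
        have h := congrArg (fun P => Matrix.mulVec P c) hreg2
        simp only [Matrix.zero_mulVec, Matrix.add_mulVec] at h
        exact eq_neg_of_add_eq_zero_left h.symm
      show (A + B * K₁).mulVec (x t - X₁.mulVec (ω t) - X₂.mulVec c) = _
      rw [hu t]
      simp only [hc, Matrix.add_mulVec, Matrix.sub_mulVec, Matrix.mulVec_add, Matrix.mulVec_sub,
        Matrix.mulVec_mulVec, Matrix.add_mul, Matrix.sub_mul, Matrix.mul_assoc]
      rw [e1, e2]
      abel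
    rw [hkey]
    exact h2
  refine ⟨hder, fun hH => ?_⟩
  obtain ⟨a₀, b, ha₀, hb, hdec⟩ := matrix_exp_decay (A + B * K₁) hH (xbar 0)
  have hsol := solution_eq_exp (A + B * K₁) xbar hder
  have hout : ∀ t, C.mulVec (x t) 0 - r = (C.mulVec (xbar t)) 0 := by
    intro t
    have h1 : C.mulVec (xbar t)
        = C.mulVec (x t) - (C * X₁).mulVec (ω t) - (C * X₂).mulVec c := by
      show C.mulVec (x t - X₁.mulVec (ω t) - X₂.mulVec c) = _
      rw [Matrix.mulVec_sub, Matrix.mulVec_sub, Matrix.mulVec_mulVec, Matrix.mulVec_mulVec]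
    rw [h1, hreg1', hreg2', Matrix.zero_mulVec, Matrix.one_mulVec]
    simp [hc]
  set W : ℝ := ∑ j, |C 0 j| with hW
  have hW0 : 0 ≤ W := Finset.sum_nonneg fun j _ => abs_nonneg _
  refine ⟨W * a₀ + 1, b, by positivity, hb, fun t ht => ?_⟩
  rw [hout t]
  have hxb : xbar t = (NormedSpace.exp (t • (A + B * K₁))).mulVec (xbar 0) := hsol t ht
  have hbound : ∀ j, |xbar t j| ≤ a₀ * Real.exp (-b * t) := by
    intro j
    rw [hxb]
    exact hdec t ht j
  calc |(C.mulVec (xbar t)) 0| = |∑ j, C 0 j * xbar t j| := by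
        simp [Matrix.mulVec, dotProduct]
    _ ≤ ∑ j, |C 0 j * xbar t j| := Finset.abs_sum_le_sum_abs _ _
    _ ≤ ∑ j, |C 0 j| * (a₀ * Real.exp (-b * t)) := by
        refine Finset.sum_le_sum fun j _ => ?_
        rw [abs_mul]
        exact mul_le_mul_of_nonneg_left (hbound j) (abs_nonneg _)
    _ = W * a₀ * Real.exp (-b * t) := by rw [← Finset.sum_mul, hW]; ring
    _ ≤ (W * a₀ + 1) * Real.exp (-b * t) := by
        have h := Real.exp_nonneg (-b * t)
        nlinarith
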